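/- Under the assumptions: V, M Hilbert spaces, K ⊆ V closed convex with 0 ∈ K, a nonnegative continuous bilinear form on V that is coercive on the kernel N of b, and b satisfying an inf-sup condition over a closed subspace W ⊆ K, the mixed variational inequality [find (Σ,u) ∈ K × M with a(Σ, Ψ−Σ) + b(Ψ−Σ, u) ≥ G(Ψ−Σ) for all Ψ ∈ K and b(Σ, v) = F(v) for all v ∈ M] has at most one solution. -/

import Mathlib

/-- uniqueness: under the assumptions of the mixed framework
(nonnegativity of `a`, coercivity of `a` on the kernel of `b`, inf-sup for `b`
over a closed subspace `W ⊆ K`), the mixed variational inequality has at most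
one solution. -/
theorem stmt_7
    {V M : Type*} [NormedAddCommGroup V] [InnerProductSpace ℝ V] [CompleteSpace V]
    [NormedAddCommGroup M] [InnerProductSpace ℝ M] [CompleteSpace M]
    (K : Set V) (hKclosed : IsClosed K) (hKconv : Convex ℝ K) (hK0 : (0:V) ∈ K)
    (a : V →L[ℝ] V →L[ℝ] ℝ) (b : V →L[ℝ] M →L[ℝ] ℝ)
    (hpos : ∀ Ψ : V, 0 ≤ a Ψ Ψ)
    (α : ℝ) (hα : 0 < α)
    (hcoer : ∀ Ψ : V, (∀ v : M, b Ψ v = 0) → α * ‖Ψ‖ ^ 2 ≤ a Ψ Ψ)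
    (W : Submodule ℝ V) (hWclosed : IsClosed (W : Set V)) (hWK : (W : Set V) ⊆ K)
    (β : ℝ) (hβ : 0 < β)
    (hinfsup : ∀ v : M, β * ‖v‖ ≤ ⨆ Ψ : W, b Ψ v / ‖(Ψ : V)‖)
    (G : V →L[ℝ] ℝ) (F : M →L[ℝ] ℝ)
    (Sg₁ Sg₂ : V) (u₁ u₂ : M)
    (hS₁ : Sg₁ ∈ K)
    (hVI₁ : ∀ Ψ ∈ K, G (Ψ - Sg₁) ≤ a Sg₁ (Ψ - Sg₁) + b (Ψ - Sg₁) u₁)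
    (heq₁ : ∀ v : M, b Sg₁ v = F v)
    (hS₂ : Sg₂ ∈ K)
    (hVI₂ : ∀ Ψ ∈ K, G (Ψ - Sg₂) ≤ a Sg₂ (Ψ - Sg₂) + b (Ψ - Sg₂) u₂)
    (heq₂ : ∀ v : M, b Sg₂ v = F v) :
    Sg₁ = Sg₂ ∧ u₁ = u₂ := by
  -- b applied to the difference vanishes
  have hbδ : ∀ v : M, b (Sg₁ - Sg₂) v = 0 := by
    intro v
    simp [map_sub, ContinuousLinearMap.sub_apply, heq₁ v, heq₂ v]
  -- Step 1: Sg₁ = Sg₂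
  have h1 := hVI₁ Sg₂ hS₂
  have h2 := hVI₂ Sg₁ hS₁
  have hb1 : b (Sg₂ - Sg₁) u₁ = 0 := by
    have h := hbδ u₁
    rw [map_sub, ContinuousLinearMap.sub_apply] at h ⊢
    linarith
  have hb2' : b (Sg₁ - Sg₂) u₂ = 0 := hbδ u₂
  rw [hb1] at h1
  rw [hb2'] at h2
  have hGsum : G (Sg₂ - Sg₁) + G (Sg₁ - Sg₂) = 0 := by
    rw [map_sub, map_sub]; ring
  have haexp : a Sg₁ (Sg₂ - Sg₁) + a Sg₂ (Sg₁ - Sg₂)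
      = -(a (Sg₁ - Sg₂) (Sg₁ - Sg₂)) := by
    simp [map_sub, ContinuousLinearMap.sub_apply]
    ring
  have haδ : a (Sg₁ - Sg₂) (Sg₁ - Sg₂) ≤ 0 := by linarith
  have hcoerδ := hcoer (Sg₁ - Sg₂) hbδ
  have hnorm0 : ‖Sg₁ - Sg₂‖ = 0 := by
    have hsq : ‖Sg₁ - Sg₂‖ ^ 2 ≤ 0 := by nlinarith
    have := sq_nonneg ‖Sg₁ - Sg₂‖
    have h0 : ‖Sg₁ - Sg₂‖ ^ 2 = 0 := le_antisymm hsq this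
    exact pow_eq_zero_iff (by norm_num) |>.mp h0
  have hSeq : Sg₁ = Sg₂ := sub_eq_zero.mp (norm_eq_zero.mp hnorm0)
  refine ⟨hSeq, ?_⟩
  -- Step 2: translation invariance: Σ ∈ K, ψ ∈ W ⇒ Σ + ψ ∈ K
  have key : ∀ T ∈ K, ∀ ψ ∈ W, T + ψ ∈ K := by
    intro T hT ψ hψ
    have hmem : ∀ t : ℝ, t ∈ Set.Ico (0:ℝ) 1 → t • T + ψ ∈ K := by
      intro t ht
      have hne : (1 : ℝ) - t ≠ 0 := by have := ht.2; intro h; linarith [sub_eq_zero.mp h]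
      have h1 : ((1 - t)⁻¹ • ψ : V) ∈ K := hWK (W.smul_mem _ hψ)
      have h2 : t • T + (1 - t) • ((1 - t)⁻¹ • ψ) ∈ K :=
        hKconv hT h1 ht.1 (by linarith [ht.2]) (by ring)
      rwa [smul_inv_smul₀ hne] at h2
    -- take limit t → 1 along the sequence 1 - 1/(n+1)
    have htend : Filter.Tendsto (fun n : ℕ => (1 - ((n:ℝ)+1)⁻¹) • T + ψ)
        Filter.atTop (nhds (T + ψ)) := by
      have h0 : Filter.Tendsto (fun n : ℕ => (1 - ((n:ℝ)+1)⁻¹)) Filter.atTop (nhds 1) := by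
        have := tendsto_one_div_add_atTop_nhds_zero_nat (𝕜 := ℝ)
        have h' : Filter.Tendsto (fun n : ℕ => ((n:ℝ)+1)⁻¹) Filter.atTop (nhds 0) := by
          simpa [one_div] using this
        have := (tendsto_const_nhds (x := (1:ℝ))).sub h'
        simpa using this
      have := (h0.smul_const T).add_const ψ
      simpa using this
    refine hKclosed.mem_of_tendsto htend ?_
    filter_upwards with n
    apply hmem
    constructor
    · have h1 : ((n:ℝ)+1)⁻¹ ≤ 1 := by
        rw [inv_le_one_iff₀]; right; linarith [Nat.cast_nonneg (α := ℝ) n]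
      linarith
    · have h1 : 0 < ((n:ℝ)+1)⁻¹ := by positivity
      linarith
  -- b ψ (u₁ - u₂) = 0 for ψ ∈ W
  subst hSeq
  have hbW : ∀ ψ ∈ W, b ψ (u₁ - u₂) = 0 := by
    intro ψ hψ
    have hp : Sg₁ + ψ ∈ K := key Sg₁ hS₁ ψ hψ
    have hm : Sg₁ + (-ψ) ∈ K := key Sg₁ hS₁ (-ψ) (W.neg_mem hψ)
    have e1 := hVI₁ _ hp
    have e2 := hVI₁ _ hm
    have e3 := hVI₂ _ hp
    have e4 := hVI₂ _ hm
    simp only [add_sub_cancel_left] at e1 e2 e3 e4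
    simp only [map_neg, ContinuousLinearMap.neg_apply] at e2 e4
    have hu1 : b ψ u₁ = G ψ - a Sg₁ ψ := by linarith
    have hu2 : b ψ u₂ = G ψ - a Sg₁ ψ := by linarith
    rw [map_sub, hu1, hu2]
    ring
  have hsup : (⨆ Ψ : W, b Ψ (u₁ - u₂) / ‖(Ψ : V)‖) = 0 := by
    have : (fun Ψ : W => b Ψ (u₁ - u₂) / ‖(Ψ : V)‖) = fun _ => (0:ℝ) := by
      funext Ψ
      rw [hbW Ψ Ψ.2, zero_div]
    rw [this]
    exact ciSup_const
  have := hinfsup (u₁ - u₂)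
  rw [hsup] at this
  have hn : ‖u₁ - u₂‖ = 0 := le_antisymm (by nlinarith [norm_nonneg (u₁ - u₂)]) (norm_nonneg _)
  exact sub_eq_zero.mp (norm_eq_zero.mp hn)
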